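/- The two recurrences e(λ) = (−1)^{λ_r}·e(λ − l̂) + (−1)^{r−1}·λ_r·e(λ − ĉ) (Ku–Wong) and e'(λ) = (−1)^h·e'(λ − ĥ) + (−1)^{h+λ₁}·h·e'(λ − ĉ) (Renteln), both with value 1 on the empty partition, define the same integer-valued function on partitions. -/

import Mathlib

def colErase (l : List ℕ) : List ℕ := (l.map (· - 1)).filter (· ≠ 0)

def IsPartition (l : List ℕ) : Prop := l.Pairwise (· ≥ ·) ∧ ∀ x ∈ l, 0 < x

lemma colErase_append (x y : List ℕ) : colErase (x ++ y) = colErase x ++ colErase y := by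
  simp [colErase, List.filter_append]

lemma colErase_concat_one (x : List ℕ) : colErase (x ++ [1]) = colErase x := by
  rw [colErase_append]; simp [colErase]

lemma colErase_of_two_le {l : List ℕ} (h : ∀ x ∈ l, 2 ≤ x) : colErase l = l.map (· - 1) := by
  unfold colErase
  apply List.filter_eq_self.mpr
  intro a ha
  obtain ⟨b, hb, rfl⟩ := List.mem_map.mp ha
  have := h b hb
  simp; omega

lemma isPartition_colErase {l : List ℕ} (h : IsPartition l) : IsPartition (colErase l) := by
  obtain ⟨hs, _⟩ := h
  constructor
  · exact List.Pairwise.sublist List.filter_sublist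
      (List.Pairwise.map _ (fun a b hab => Nat.sub_le_sub_right hab 1) hs)
  · intro x hx
    have := List.of_mem_filter hx
    simpa using Nat.pos_of_ne_zero (by simpa using this)

lemma isPartition_sublist {l l' : List ℕ} (h : IsPartition l) (hs : List.Sublist l' l) :
    IsPartition l' :=
  ⟨List.Pairwise.sublist hs h.1, fun x hx => h.2 x (hs.mem hx)⟩

lemma sorted_concat_le {L : List ℕ} {a : ℕ} (hs : (L ++ [a]).Pairwise (· ≥ ·)) :
    ∀ x ∈ L ++ [a], a ≤ x := by
  intro x hx
  rcases List.mem_append.mp hx with hx | hx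
  · exact (List.pairwise_append.mp hs).2.2 x hx a (by simp)
  · simp at hx; omega

lemma sum_map_pred_le (l : List ℕ) : (l.map (· - 1)).sum ≤ l.sum := by
  induction l with
  | nil => simp
  | cons a t ih => simp only [List.map_cons, List.sum_cons]; omega

lemma sum_colErase_le (l : List ℕ) : (colErase l).sum ≤ l.sum := by
  have h1 : (colErase l).sum ≤ (l.map (· - 1)).sum := by
    unfold colErase
    exact (List.filter_sublist).sum_le_sum (by simp)
  exact le_trans h1 (sum_map_pred_le l)

lemma sum_map_pred_lt {l : List ℕ} (hne : l ≠ []) (hpos : ∀ x ∈ l, 0 < x) :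
    (l.map (· - 1)).sum < l.sum := by
  rcases l with _ | ⟨a, t⟩
  · simp at hne
  · have := hpos a (by simp)
    have := sum_map_pred_le t
    simp only [List.map_cons, List.sum_cons]
    omega

lemma sum_colErase_lt {l : List ℕ} (hne : l ≠ []) (hpos : ∀ x ∈ l, 0 < x) :
    (colErase l).sum < l.sum := by
  have h1 : (colErase l).sum ≤ (l.map (· - 1)).sum := by
    unfold colErase
    exact (List.filter_sublist).sum_le_sum (by simp)
  exact lt_of_le_of_lt h1 (sum_map_pred_lt hne hpos)

def Gstmt (e' : List ℕ → ℤ) (l : List ℕ) : Prop :=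
  (-1) ^ (l.getLastD 0) * e' l.dropLast
  = (-1) ^ (l.headD 0 + l.length - 1) * e' (colErase l.tail)
    + (-1) ^ (l.length - 1) * ((l.headD 0 + l.length - 1 - l.getLastD 0 : ℕ) : ℤ)
      * e' (colErase l)

lemma kw_of_G (e' : List ℕ → ℤ)
    (hR : ∀ l : List ℕ, IsPartition l → l ≠ [] →
      e' l = (-1) ^ (l.headD 0 + l.length - 1) * e' (colErase l.tail)
        + (-1) ^ (l.headD 0 + l.length - 1 + l.headD 0)
          * ((l.headD 0 + l.length - 1 : ℕ) : ℤ) * e' (colErase l))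
    {l : List ℕ} (hp : IsPartition l) (hne : l ≠ []) (hG : Gstmt e' l) :
    e' l = (-1) ^ (l.getLastD 0) * e' l.dropLast
      + (-1) ^ (l.length - 1) * (l.getLastD 0 : ℤ) * e' (colErase l) := by
  rw [hR l hp hne]
  rw [Gstmt] at hG
  rw [hG]
  rcases List.eq_nil_or_concat l with rfl | ⟨L, a, rfl⟩
  · simp at hne
  simp only [List.concat_eq_append] at hp hG ⊢
  rcases L with _ | ⟨c, L'⟩
  · -- l = [a]
    simp only [List.nil_append, List.headD_cons, List.length_cons, List.length_nil,
      List.getLastD_concat] at hG ⊢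
    rw [show [a].getLastD 0 = a from rfl] at hG ⊢
    rw [show a + (0 + 1) - 1 = a from by omega] at hG
    rw [show a + 1 - 1 = a from by omega]
    rw [show a - a = 0 from by omega]
    rw [show (-1 : ℤ) ^ (a + a) = 1 from by
      rw [show a + a = 2 * a from by omega, pow_mul]; norm_num]
    push_cast
    ring
  · -- l = c :: L' ++ [a]
    have ha_le : a ≤ c := by
      have := sorted_concat_le (L := c :: L') (a := a) hp.1 c (by simp)
      exact this
    simp only [List.cons_append, List.headD_cons, List.length_cons, List.length_append,
      List.length_cons, List.length_nil, List.getLastD_concat] at hG ⊢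
    rw [show (c :: (L' ++ [a])).getLastD 0 = a from by
      rw [← List.cons_append, List.getLastD_concat]] at hG ⊢
    set n := L'.length with hn
    rw [show c + (n + 1 + 1) - 1 = c + n + 1 from by omega,
        show n + 1 + 1 - 1 = n + 1 from by omega] at hG ⊢
    rw [show (-1 : ℤ) ^ (c + n + 1 + c) = (-1) ^ (n + 1) from by
      rw [show c + n + 1 + c = 2 * c + (n + 1) from by omega, pow_add, pow_mul]; norm_num]
    rw [Nat.cast_sub (by omega)]
    push_cast
    ring

lemma lemG (e' : List ℕ → ℤ)
    (hR : ∀ l : List ℕ, IsPartition l → l ≠ [] →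
      e' l = (-1) ^ (l.headD 0 + l.length - 1) * e' (colErase l.tail)
        + (-1) ^ (l.headD 0 + l.length - 1 + l.headD 0)
          * ((l.headD 0 + l.length - 1 : ℕ) : ℤ) * e' (colErase l)) :
    ∀ (n : ℕ) (l : List ℕ), l.sum ≤ n → IsPartition l → l ≠ [] → Gstmt e' l := by
  intro n
  induction n using Nat.strong_induction_on with
  | _ n ih =>
  intro l hsum hp hne
  rcases List.eq_nil_or_concat l with rfl | ⟨L, a, rfl⟩
  · simp at hne
  simp only [List.concat_eq_append] at hp hsum ⊢
  have hapos : 0 < a := hp.2 a (by simp)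
  rcases L with _ | ⟨b, M⟩
  · -- single row case l = [a]
    rw [Gstmt]
    simp only [List.nil_append, List.dropLast_singleton, List.headD_cons, List.length_cons,
      List.length_nil, List.tail_cons, List.getLastD_concat]
    rw [show [a].getLastD 0 = a from rfl]
    rw [show a + (0 + 1) - 1 = a from by omega, show a - a = 0 from by omega]
    norm_num [colErase]
  -- l = (b :: M) ++ [a], at least two rows
  have hble : a ≤ b := sorted_concat_le hp.1 b (by simp)
  set m := M.length with hm
  -- Renteln at L = b :: M
  have hpL : IsPartition (b :: M) := isPartition_sublist hp (List.sublist_append_left _ _)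
  have hA := hR (b :: M) hpL (by simp)
  simp only [List.headD_cons, List.length_cons, List.tail_cons] at hA
  rw [show b + (m + 1) - 1 = b + m from by omega] at hA
  rw [show (-1 : ℤ) ^ (b + m + b) = (-1) ^ m from by
    rw [show b + m + b = 2 * b + m from by omega, pow_add, pow_mul]; norm_num] at hA
  -- goal components
  rw [Gstmt]
  rw [show ((b :: M) ++ [a]).getLastD 0 = a from List.getLastD_concat]
  rw [show ((b :: M) ++ [a]).dropLast = b :: M from List.dropLast_concat]
  rw [show ((b :: M) ++ [a]).headD 0 = b from by simp]
  rw [show ((b :: M) ++ [a]).length = m + 2 from by simp [hm]]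
  rw [show ((b :: M) ++ [a]).tail = M ++ [a] from by simp]
  rw [show b + (m + 2) - 1 = b + m + 1 from by omega,
      show m + 2 - 1 = m + 1 from by omega]
  rcases Nat.lt_or_ge a 2 with ha1 | ha2
  · -- case a = 1
    have : a = 1 := by omega
    subst this
    rw [colErase_concat_one M, colErase_concat_one (b :: M)]
    rw [show b + m + 1 - 1 = b + m from by omega]
    push_cast at hA ⊢
    linear_combination (-1 : ℤ) * hA
  · -- case a ≥ 2
    obtain ⟨α, rfl⟩ : ∃ α, a = α + 2 := ⟨a - 2, by omega⟩
    have h2 : ∀ x ∈ (b :: M) ++ [α + 2], 2 ≤ x :=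
      fun x hx => le_trans ha2 (sorted_concat_le hp.1 x hx)
    have hcM : colErase M = M.map (· - 1) :=
      colErase_of_two_le (fun x hx => h2 x (by simp [hx]))
    have hcbM : colErase (b :: M) = (b - 1) :: M.map (· - 1) := by
      rw [colErase_of_two_le (fun x hx => h2 x (by simp at hx ⊢; tauto)), List.map_cons]
    have hcMa : colErase (M ++ [α + 2]) = M.map (· - 1) ++ [α + 1] := by
      rw [colErase_of_two_le (fun x hx => h2 x (by simp at hx ⊢; tauto))]
      simp
    have hcl : colErase ((b :: M) ++ [α + 2]) = (b - 1) :: (M.map (· - 1) ++ [α + 1]) := by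
      rw [colErase_of_two_le h2]
      simp
    -- partitions
    have hpt : IsPartition (M ++ [α + 2]) :=
      isPartition_sublist hp (by rw [List.cons_append]; exact List.sublist_cons_self _ _)
    have hpμ : IsPartition (M.map (· - 1) ++ [α + 1]) := hcMa ▸ isPartition_colErase hpt
    have hpν : IsPartition ((b - 1) :: (M.map (· - 1) ++ [α + 1])) :=
      hcl ▸ isPartition_colErase hp
    -- sums
    have hμ2 : (M ++ [α + 2]).map (· - 1) = M.map (· - 1) ++ [α + 1] := by simp
    have hν2 : ((b :: M) ++ [α + 2]).map (· - 1) = (b - 1) :: (M.map (· - 1) ++ [α + 1]) := by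
      simp
    have hsν : ((b - 1) :: (M.map (· - 1) ++ [α + 1])).sum < n := by
      rw [← hν2]
      exact lt_of_lt_of_le (sum_map_pred_lt (by simp) hp.2) hsum
    have hsμ : (M.map (· - 1) ++ [α + 1]).sum < n := by
      rw [← hμ2]
      have h1 : ((M ++ [α + 2]).map (· - 1)).sum < (M ++ [α + 2]).sum :=
        sum_map_pred_lt (by simp) hpt.2
      have h2' : (M ++ [α + 2]).sum < ((b :: M) ++ [α + 2]).sum := by
        simp [List.sum_append]; omega
      omega
    -- induction hypotheses
    have hGμ : Gstmt e' (M.map (· - 1) ++ [α + 1]) :=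
      ih _ hsμ _ le_rfl hpμ (by simp)
    have hGν : Gstmt e' ((b - 1) :: (M.map (· - 1) ++ [α + 1])) :=
      ih _ hsν _ le_rfl hpν (by simp)
    have hB := kw_of_G e' hR hpμ (by simp) hGμ
    have hC := kw_of_G e' hR hpν (by simp) hGν
    -- normalize hB
    have hgl : ((b - 1) :: (M.map (· - 1) ++ [α + 1])).getLastD 0 = α + 1 := by
      rw [← List.cons_append, List.getLastD_concat]
    have hdl : ((b - 1) :: (M.map (· - 1) ++ [α + 1])).dropLast = (b - 1) :: M.map (· - 1) := by
      rw [← List.cons_append, List.dropLast_concat]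
    rw [Gstmt] at hGν
    rw [List.getLastD_concat, List.dropLast_concat] at hB
    rw [hgl, hdl] at hC hGν
    rw [List.headD_cons, List.tail_cons] at hGν
    simp only [List.length_append, List.length_map, List.length_cons, List.length_nil,
      ← hm] at hB hC hGν
    rw [show m + 1 - 1 = m from by omega] at hB
    rw [show m + 1 + 1 - 1 = m + 1 from by omega] at hC hGν
    rw [show b - 1 + (m + 1 + 1) - 1 = b + m from by omega] at hGν
    -- rewrite goal and hA into map-normal form
    rw [hcMa, hcl]
    rw [hcM, hcbM] at hA
    rw [show b + m + 1 - (α + 2) = b + m - (α + 1) from by omega]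
    rw [Nat.cast_sub (show α + 1 ≤ b + m from by omega)] at hGν ⊢
    push_cast at hA hB hC hGν ⊢
    linear_combination ((-1 : ℤ) ^ (α + 2)) * hA + ((-1 : ℤ) ^ (b + m)) * hB
      + ((-1 : ℤ) ^ m) * ((b : ℤ) + (m : ℤ) - (α : ℤ) - 1) * hC
      - (((α : ℤ) + 1) * (-1 : ℤ) ^ m) * hGν


theorem stmt_16 (e e' : List ℕ → ℤ) (h0 : e [] = 1) (h0' : e' [] = 1)
    (hKW : ∀ l : List ℕ, IsPartition l → l ≠ [] →
      e l = (-1) ^ (l.getLastD 0) * e l.dropLast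
        + (-1) ^ (l.length - 1) * (l.getLastD 0 : ℤ) * e (colErase l))
    (hR : ∀ l : List ℕ, IsPartition l → l ≠ [] →
      e' l = (-1) ^ (l.headD 0 + l.length - 1) * e' (colErase l.tail)
        + (-1) ^ (l.headD 0 + l.length - 1 + l.headD 0)
          * ((l.headD 0 + l.length - 1 : ℕ) : ℤ) * e' (colErase l)) :
    ∀ l : List ℕ, IsPartition l → e l = e' l := by
  suffices h : ∀ (n : ℕ) (l : List ℕ), l.sum ≤ n → IsPartition l → e l = e' l from
    fun l hp => h l.sum l le_rfl hp
  intro n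
  induction n using Nat.strong_induction_on with
  | _ n ih =>
  intro l hsum hp
  rcases eq_or_ne l [] with rfl | hne
  · rw [h0, h0']
  have hdrop : l.dropLast.sum < l.sum := by
    rcases List.eq_nil_or_concat l with rfl | ⟨L, a, rfl⟩
    · simp at hne
    · have ha : 0 < a := hp.2 a (by simp)
      simp only [List.concat_eq_append, List.dropLast_concat, List.sum_append,
        List.sum_cons, List.sum_nil]
      omega
  have h1 : e l.dropLast = e' l.dropLast :=
    ih l.dropLast.sum (lt_of_lt_of_le hdrop hsum) _ le_rfl
      (isPartition_sublist hp (List.dropLast_sublist l))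
  have h2 : e (colErase l) = e' (colErase l) :=
    ih (colErase l).sum (lt_of_lt_of_le (sum_colErase_lt hne hp.2) hsum) _ le_rfl
      (isPartition_colErase hp)
  rw [hKW l hp hne, kw_of_G e' hR hp hne (lemG e' hR l.sum l le_rfl hp hne), h1, h2]
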